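/- arXiv:1806.03478 — 5 statements merged into one kernel-verified Lean document; each statement's English description precedes it below -/
import Mathlib

section
/- If X ~ t_k(ν, Σ) has a multivariate Student-t distribution with k > 1 degrees of freedom, then the matrix τ₁(x) = ((x-ν)ᵀ Σ⁻¹ (x-ν) + k)/(d + k - 2) · Σ is a Stein kernel for X, i.e. div(τ₁ · t_k)(x) = (ν - x) t_k(x) for all x ∈ ℝ^d, where t_k is the Student-t density. -/
open MeasureTheory Real Matrix

/-- The multivariate Student-t density with `k` degrees of freedom, location `ν`
and shape matrix `S` on `ℝ^d`. -/
noncomputable def studentDensity (d : ℕ) (k : ℝ) (ν : Fin d → ℝ)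
    (S : Matrix (Fin d) (Fin d) ℝ) (x : Fin d → ℝ) : ℝ :=
  (Real.Gamma ((k + d) / 2) /
      (Real.Gamma (k / 2) * k ^ ((d : ℝ) / 2) * π ^ ((d : ℝ) / 2))) *
    S.det ^ (-(1 : ℝ) / 2) *
    (1 + dotProduct (x - ν) (S⁻¹.mulVec (x - ν)) / k) ^ (-((k + d) / 2))

/-- The matrix `τ₁(x) = ((x-ν)ᵀ S⁻¹ (x-ν) + k)/(d + k - 2) · S` is a Stein kernel
for the multivariate Student-t distribution with `k > 1`:
`div(τ₁ t_k)(x) = (ν - x) t_k(x)` (row-wise divergence). -/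
theorem student_stein_kernel_one (d : ℕ) (hd : 1 ≤ d) (k : ℝ) (hk : 1 < k)
    (ν : Fin d → ℝ) (S : Matrix (Fin d) (Fin d) ℝ) (hS : S.PosDef) :
    ∀ x, ∀ i,
      (∑ j, fderiv ℝ (fun y =>
          ((dotProduct (y - ν) (S⁻¹.mulVec (y - ν)) + k) / ((d : ℝ) + k - 2)) * S i j *
            studentDensity d k ν S y) x (Pi.single j 1))
        = (ν i - x i) * studentDensity d k ν S x := by
  intro x i
  have hk0 : (0:ℝ) < k := by linarith
  have hd1 : (1:ℝ) ≤ (d:ℝ) := by exact_mod_cast hd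
  have hc : ((d:ℝ) + k - 2) ≠ 0 := by nlinarith
  set M : Matrix (Fin d) (Fin d) ℝ := S⁻¹ with hM
  set u : Fin d → ℝ := x - ν with hu
  set w : Fin d → ℝ := M *ᵥ u with hw
  have hMsymm : ∀ a b, M a b = M b a := by
    intro a b
    simpa using (hS.inv.isHermitian.apply a b).symm
  set q0 : ℝ := u ⬝ᵥ w with hq0def
  have hq0nonneg : 0 ≤ q0 := by
    have := hS.inv.posSemidef.dotProduct_mulVec_nonneg u
    simpa [hq0def, hw] using this
  have hb : (0:ℝ) < 1 + q0 / k := by positivity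
  set E : ℝ := -((k + (d:ℝ))/2) with hE
  set Cst : ℝ := (Real.Gamma ((k + d) / 2) /
      (Real.Gamma (k / 2) * k ^ ((d : ℝ) / 2) * π ^ ((d : ℝ) / 2))) *
    S.det ^ (-(1 : ℝ) / 2) with hCst
  -- derivative of the quadratic form
  set Φ : (Fin d → ℝ) →L[ℝ] ℝ :=
    ∑ a, ∑ b, M a b • ((x a - ν a) • ContinuousLinearMap.proj b
      + (x b - ν b) • ContinuousLinearMap.proj a) with hΦ
  have hQ : HasFDerivAt (fun y : Fin d → ℝ => (y - ν) ⬝ᵥ M *ᵥ (y - ν)) Φ x := by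
    have heq : (fun y : Fin d → ℝ => (y - ν) ⬝ᵥ M *ᵥ (y - ν))
        = fun y => ∑ a, ∑ b, M a b * ((y a - ν a) * (y b - ν b)) := by
      funext y
      simp only [dotProduct, mulVec, Pi.sub_apply, Finset.mul_sum]
      exact Finset.sum_congr rfl fun a _ => Finset.sum_congr rfl fun b _ => by ring
    rw [heq, hΦ]
    refine HasFDerivAt.fun_sum fun a _ => HasFDerivAt.fun_sum fun b _ => ?_
    exact (((hasFDerivAt_apply a x).sub_const (ν a)).mul
      ((hasFDerivAt_apply b x).sub_const (ν b))).const_mul (M a b)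
  have hΦj : ∀ j, Φ (Pi.single j 1) = 2 * w j := by
    intro j
    rw [hΦ]
    simp only [ContinuousLinearMap.coe_sum', Finset.sum_apply,
      ContinuousLinearMap.add_apply, ContinuousLinearMap.coe_smul', Pi.smul_apply,
      ContinuousLinearMap.proj_apply, Pi.single_apply, smul_eq_mul,
      mul_ite, mul_one, mul_zero, mul_add]
    rw [Finset.sum_comm]
    simp only [Finset.sum_add_distrib, Finset.sum_ite_eq', Finset.mem_univ, if_true,
      ← Finset.sum_ite_irrel]
    have h1 : (∑ x1 : Fin d, ∑ x2 : Fin d, if x1 = j then M x2 x1 * (x x2 - ν x2) else 0)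
        = ∑ x2, M x2 j * (x x2 - ν x2) := by
      rw [Finset.sum_comm]; simp [Finset.sum_ite_eq']
    rw [h1]
    have h2 : ∀ a, M a j = M j a := fun a => hMsymm a j
    simp only [h2]
    simp [hw, mulVec, dotProduct, hu, two_mul]
  -- scalar derivative
  have hinner : HasDerivAt (fun t : ℝ => 1 + t / k) k⁻¹ q0 := by
    simpa [one_div] using ((hasDerivAt_id q0).div_const k).const_add 1
  have houter := Real.hasDerivAt_rpow_const (x := 1 + q0 / k) (p := E) (Or.inl hb.ne')
  have hg : HasDerivAt (fun t : ℝ => (1 + t / k) ^ E)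
      (E * (1 + q0 / k) ^ (E - 1) * k⁻¹) q0 := by have := houter.comp q0 hinner; exact this
  have hh : HasDerivAt (fun t : ℝ => (t + k) * (1 + t / k) ^ E)
      (1 * (1 + q0 / k) ^ E + (q0 + k) * (E * (1 + q0 / k) ^ (E - 1) * k⁻¹)) q0 :=
    ((hasDerivAt_id q0).add_const k).mul hg
  set D' : ℝ := 1 * (1 + q0 / k) ^ E + (q0 + k) * (E * (1 + q0 / k) ^ (E - 1) * k⁻¹)
    with hD'def
  have key : (q0 + k) * (1 + q0 / k) ^ (E - 1) = k * (1 + q0 / k) ^ E := by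
    rw [Real.rpow_sub hb, Real.rpow_one]
    field_simp
    ring
  have hD' : D' = (1 + E) * (1 + q0 / k) ^ E := by
    rw [hD'def,
      show (q0 + k) * (E * (1 + q0 / k) ^ (E - 1) * k⁻¹)
        = (E * k⁻¹) * ((q0 + k) * (1 + q0 / k) ^ (E - 1)) from by ring, key]
    field_simp
  -- per-summand derivative
  have hterm : ∀ j, (fderiv ℝ (fun y =>
        ((dotProduct (y - ν) (M.mulVec (y - ν)) + k) / ((d : ℝ) + k - 2)) * S i j *
          studentDensity d k ν S y) x) (Pi.single j 1)
      = (S i j * Cst / ((d : ℝ) + k - 2)) * (D' * (2 * w j)) := by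
    intro j
    have hFeq : (fun y =>
          ((dotProduct (y - ν) (M.mulVec (y - ν)) + k) / ((d : ℝ) + k - 2)) * S i j *
            studentDensity d k ν S y)
        = fun y => (S i j * Cst / ((d : ℝ) + k - 2)) *
            (((y - ν) ⬝ᵥ M *ᵥ (y - ν) + k) * (1 + ((y - ν) ⬝ᵥ M *ᵥ (y - ν)) / k) ^ E) := by
      funext y
      simp only [studentDensity, ← hM, hCst, hE]
      ring
    rw [hFeq]
    have hF : HasFDerivAt (fun y : Fin d → ℝ =>
        ((y - ν) ⬝ᵥ M *ᵥ (y - ν) + k) * (1 + ((y - ν) ⬝ᵥ M *ᵥ (y - ν)) / k) ^ E)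
        (D' • Φ) x := by have := hh.comp_hasFDerivAt x hQ; exact this
    rw [(hF.const_mul _).fderiv]
    simp [hΦj j, mul_comm]
  rw [Finset.sum_congr rfl fun j _ => hterm j]
  -- sum up
  have hsum : ∑ j, (S i j * Cst / ((d:ℝ) + k - 2)) * (D' * (2 * w j))
      = (Cst * D' * 2 / ((d:ℝ) + k - 2)) * ∑ j, S i j * w j := by
    rw [Finset.mul_sum]
    exact Finset.sum_congr rfl fun j _ => by ring
  rw [hsum]
  have hSw : (∑ j, S i j * w j) = u i := by
    have h1 : S *ᵥ w = u := by
      rw [hw, Matrix.mulVec_mulVec, hM,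
        Matrix.mul_nonsing_inv S (isUnit_iff_ne_zero.2 hS.det_pos.ne'),
        Matrix.one_mulVec]
    calc (∑ j, S i j * w j) = (S *ᵥ w) i := by simp [mulVec, dotProduct]
      _ = u i := by rw [h1]
  rw [hSw, hD']
  have hden : studentDensity d k ν S x = Cst * (1 + q0 / k) ^ E := by
    simp only [studentDensity, ← hM, hCst, hE, hq0def, hw, hu]
  rw [hden]
  have hui : u i = x i - ν i := rfl
  rw [hui, hE]
  field_simp
  ring
end

section
/- If X ~ t_k(ν, Σ) with k > 2, then τ₂(x) = (1/(k-1)) ((x-ν)(x-ν)ᵀ + k Σ) is a Stein kernel for X, i.e. div(τ₂ · t_k)(x) = (ν - x) t_k(x) for all x. -/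
open MeasureTheory Real Matrix

/-- The matrix `τ₂(x) = (1/(k-1)) ((x-ν)(x-ν)ᵀ + k S)` is a Stein kernel for the
multivariate Student-t distribution with `k > 2`:
`div(τ₂ t_k)(x) = (ν - x) t_k(x)` (row-wise divergence). -/
theorem student_stein_kernel_two (d : ℕ) (hd : 1 ≤ d) (k : ℝ) (hk : 2 < k)
    (ν : Fin d → ℝ) (S : Matrix (Fin d) (Fin d) ℝ) (hS : S.PosDef) :
    ∀ x, ∀ i,
      (∑ j, fderiv ℝ (fun y =>
          (1 / (k - 1)) * ((y i - ν i) * (y j - ν j) + k * S i j) *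
            studentDensity d k ν S y) x (Pi.single j 1))
        = (ν i - x i) * studentDensity d k ν S x := by
  intro x i
  have hk0 : (0:ℝ) < k := by linarith
  set M : Matrix (Fin d) (Fin d) ℝ := S⁻¹ with hMdef
  have hMsymm : ∀ a b, M a b = M b a := by
    intro a b
    have h1 : Mᵀ = M := by
      rw [hMdef, Matrix.transpose_nonsing_inv]
      congr 1
      simpa using hS.isHermitian.eq
    simpa using congrFun (congrFun h1 b) a
  have hSM : S * M = 1 := Matrix.mul_nonsing_inv S hS.det_pos.ne'.isUnit
  set q : ℝ := dotProduct (x - ν) (M.mulVec (x - ν)) with hqdef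
  have hq0 : 0 ≤ q := by
    have := (hS.inv.posSemidef).dotProduct_mulVec_nonneg (x - ν)
    simpa [hqdef, hMdef] using this
  have hgx : (0:ℝ) < 1 + q / k := by positivity
  set p : ℝ := -((k + d) / 2) with hpdef
  set A : ℝ := (Real.Gamma ((k + d) / 2) /
      (Real.Gamma (k / 2) * k ^ ((d : ℝ) / 2) * π ^ ((d : ℝ) / 2))) *
    S.det ^ (-(1 : ℝ) / 2) with hAdef
  have hfdef : ∀ y, studentDensity d k ν S y
      = A * (1 + dotProduct (y - ν) (M.mulVec (y - ν)) / k) ^ p := fun y => rfl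
  set P : Fin d → ((Fin d → ℝ) →L[ℝ] ℝ) :=
    fun a => ContinuousLinearMap.proj a with hPdef
  have hpa : ∀ a, HasFDerivAt (fun y : Fin d → ℝ => y a - ν a) (P a) x :=
    fun a => (hasFDerivAt_apply a x).sub_const (ν a)
  set Lq : (Fin d → ℝ) →L[ℝ] ℝ :=
    ∑ a, ∑ b, ((x a - ν a) • (M a b • P b) + (M a b * (x b - ν b)) • P a) with hLqdef
  have hq : HasFDerivAt (fun y => dotProduct (y - ν) (M.mulVec (y - ν))) Lq x := by
    have h : HasFDerivAt
        (fun y : Fin d → ℝ => ∑ a, ∑ b, (y a - ν a) * (M a b * (y b - ν b))) Lq x :=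
      HasFDerivAt.fun_sum fun a _ => HasFDerivAt.fun_sum fun b _ =>
        (hpa a).mul ((hpa b).const_mul (M a b))
    have heq : (fun y : Fin d → ℝ => dotProduct (y - ν) (M.mulVec (y - ν)))
        = fun y : Fin d → ℝ => ∑ a, ∑ b, (y a - ν a) * (M a b * (y b - ν b)) := by
      funext y
      simp [dotProduct, Matrix.mulVec, Finset.mul_sum]
    rw [heq]; exact h
  have hg : HasFDerivAt
      (fun y => 1 + dotProduct (y - ν) (M.mulVec (y - ν)) / k) (k⁻¹ • Lq) x := by
    have h := (hq.const_mul k⁻¹).const_add 1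
    have heq : (fun y : Fin d → ℝ => 1 + dotProduct (y - ν) (M.mulVec (y - ν)) / k)
        = fun y => 1 + k⁻¹ * dotProduct (y - ν) (M.mulVec (y - ν)) := by
      funext y; rw [div_eq_inv_mul]
    rw [heq]; exact h
  have hpow : HasDerivAt (fun t : ℝ => t ^ p) (p * (1 + q / k) ^ (p - 1)) (1 + q / k) :=
    Real.hasDerivAt_rpow_const (Or.inl hgx.ne')
  have hf : HasFDerivAt (studentDensity d k ν S)
      (A • ((p * (1 + q / k) ^ (p - 1)) • (k⁻¹ • Lq))) x := by
    have h := (hpow.comp_hasFDerivAt x hg).const_mul A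
    have heq : (fun y => studentDensity d k ν S y)
        = fun y => A * (1 + dotProduct (y - ν) (M.mulVec (y - ν)) / k) ^ p := by
      funext y; exact hfdef y
    rw [show studentDensity d k ν S = fun y => studentDensity d k ν S y from rfl, heq]
    exact h
  have hF : ∀ j, HasFDerivAt (fun y =>
      (1 / (k - 1)) * ((y i - ν i) * (y j - ν j) + k * S i j) *
        studentDensity d k ν S y)
      (((1 / (k - 1)) * ((x i - ν i) * (x j - ν j) + k * S i j)) •
          (A • ((p * (1 + q / k) ^ (p - 1)) • (k⁻¹ • Lq)))
        + studentDensity d k ν S x •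
          ((1 / (k - 1)) • ((x i - ν i) • P j + (x j - ν j) • P i))) x := by
    intro j
    exact ((((hpa i).mul (hpa j)).add_const (k * S i j)).const_mul (1 / (k - 1))).mul hf
  have hLq : ∀ c, Lq (Pi.single c 1) = 2 * (M.mulVec (x - ν)) c := by
    intro c
    rw [hLqdef]
    simp only [ContinuousLinearMap.coe_sum', Finset.sum_apply,
      ContinuousLinearMap.add_apply, ContinuousLinearMap.coe_smul',
      Pi.smul_apply, hPdef, ContinuousLinearMap.proj_apply, smul_eq_mul,
      Pi.single_apply]
    simp only [mul_ite, mul_one, mul_zero, Finset.sum_ite_eq', Finset.mem_univ, if_true,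
      Finset.sum_add_distrib, Finset.sum_ite_eq]
    rw [Matrix.mulVec, dotProduct]
    have h2 : ∑ a, ∑ b, (if a = c then M a b * (x b - ν b) else 0)
        = ∑ b, M c b * (x b - ν b) := by
      rw [Finset.sum_comm]
      simp [Finset.sum_ite_eq]
    have h1 : ∑ a, (x a - ν a) * M a c = ∑ b, M c b * (x b - ν b) := by
      refine Finset.sum_congr rfl fun a _ => ?_
      rw [hMsymm a c]; ring
    rw [h1, h2]
    simp only [Pi.sub_apply]
    ring
  have hval : ∀ j, fderiv ℝ (fun y =>
      (1 / (k - 1)) * ((y i - ν i) * (y j - ν j) + k * S i j) *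
        studentDensity d k ν S y) x (Pi.single j 1)
      = (1 / (k - 1) * ((x i - ν i) * (x j - ν j) + k * S i j)) *
          (A * ((p * (1 + q / k) ^ (p - 1)) * (k⁻¹ * (2 * (M.mulVec (x - ν)) j))))
        + studentDensity d k ν S x *
          ((1 / (k - 1)) * ((x i - ν i) + (x j - ν j) * (if i = j then 1 else 0))) := by
    intro j
    rw [(hF j).fderiv]
    simp only [ContinuousLinearMap.add_apply, ContinuousLinearMap.coe_smul',
      Pi.smul_apply, smul_eq_mul, hLq j, hPdef, ContinuousLinearMap.proj_apply,
      Pi.single_apply, Pi.single_eq_same, eq_self_iff_true, if_true]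
    ring
  rw [Finset.sum_congr rfl fun j _ => hval j, Finset.sum_add_distrib]
  -- second sum
  have hs2 : ∑ j, studentDensity d k ν S x *
      ((1 / (k - 1)) * ((x i - ν i) + (x j - ν j) * (if i = j then 1 else 0)))
      = studentDensity d k ν S x * ((1 / (k - 1)) * ((d + 1) * (x i - ν i))) := by
    rw [← Finset.mul_sum, ← Finset.mul_sum]
    congr 2
    rw [Finset.sum_add_distrib]
    simp only [mul_ite, mul_one, mul_zero, Finset.sum_ite_eq, Finset.mem_univ, if_true,
      Finset.sum_const, Finset.card_univ, Fintype.card_fin, nsmul_eq_mul]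
    ring
  -- first sum
  have hkey : ∑ j, ((x i - ν i) * (x j - ν j) + k * S i j) * (M.mulVec (x - ν)) j
      = (x i - ν i) * (q + k) := by
    have h1 : ∑ j, (x j - ν j) * (M.mulVec (x - ν)) j = q := by
      rw [hqdef, dotProduct]
      exact Finset.sum_congr rfl fun j _ => by simp [Pi.sub_apply]
    have h2 : ∑ j, S i j * (M.mulVec (x - ν)) j = x i - ν i := by
      have h3 : S.mulVec (M.mulVec (x - ν)) = x - ν := by
        rw [Matrix.mulVec_mulVec, hSM, Matrix.one_mulVec]
      have h4 := congrFun h3 i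
      simpa [Matrix.mulVec, dotProduct, Pi.sub_apply] using h4
    calc ∑ j, ((x i - ν i) * (x j - ν j) + k * S i j) * (M.mulVec (x - ν)) j
        = ∑ j, ((x i - ν i) * ((x j - ν j) * (M.mulVec (x - ν)) j)
            + k * (S i j * (M.mulVec (x - ν)) j)) :=
          Finset.sum_congr rfl fun j _ => by ring
      _ = (x i - ν i) * (q + k) := by
          rw [Finset.sum_add_distrib, ← Finset.mul_sum, ← Finset.mul_sum, h1, h2]; ring
  have hs1 : ∑ j, (1 / (k - 1) * ((x i - ν i) * (x j - ν j) + k * S i j)) *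
      (A * ((p * (1 + q / k) ^ (p - 1)) * (k⁻¹ * (2 * (M.mulVec (x - ν)) j))))
      = (1 / (k - 1)) * A * p * (1 + q / k) ^ (p - 1) * k⁻¹ * 2 *
        ((x i - ν i) * (q + k)) := by
    rw [← hkey, Finset.mul_sum]
    exact Finset.sum_congr rfl fun j _ => by ring
  rw [hs1, hs2, hfdef x]
  have hpow2 : (1 + q / k) ^ (p - 1) * (1 + q / k) = (1 + q / k) ^ p := by
    have h := (Real.rpow_add hgx (p - 1) 1).symm
    simpa [Real.rpow_one] using h
  have hne1 : k - 1 ≠ 0 := by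
    intro h; linarith
  have hp2 : 2 * p = -(k + d) := by rw [hpdef]; ring
  have hkne : k ≠ 0 := hk0.ne'
  have hqk : (1 + q / k) * k = q + k := by
    rw [add_mul, one_mul, div_mul_cancel₀ _ hkne]; ring
  have hGq2 : (1 + q / k) ^ (p - 1) * (q + k) = (1 + q / k) ^ p * k := by
    rw [← hqk, ← hpow2]; ring
  have hcank : k * k⁻¹ = 1 := mul_inv_cancel₀ hkne
  have hcan1 : (k - 1) * (k - 1)⁻¹ = 1 := mul_inv_cancel₀ hne1
  linear_combination (2 * A * p * (x i - ν i) * (1 / (k - 1)) * k⁻¹) * hGq2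
    + (2 * A * p * (x i - ν i) * (1 / (k - 1)) * (1 + q / k) ^ p) * hcank
    + ((x i - ν i) * A * (1 + q / k) ^ p * (1 / (k - 1))) * hp2
    + (-(x i - ν i) * A * (1 + q / k) ^ p) * hcan1
end

section
/- Let p : ℝ⁺ be an elliptical density E_d(ν, Σ, φ) with φ C¹ and positive on (0,∞) and ∫₀^∞ φ < ∞. Then the matrix τ₁(x) = (1/φ(t)) ∫_t^∞ φ(u) du · Σ, with t = (x-ν)ᵀΣ⁻¹(x-ν)/2, satisfies div(τ₁ p)(x) = (ν - x) p(x) for all x with p(x) > 0. -/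
open MeasureTheory Real Matrix

lemma quad_deriv {d : ℕ} (A : Matrix (Fin d) (Fin d) ℝ)
    (hA : ∀ k l, A k l = A l k) (ν x : Fin d → ℝ) :
    ∃ D : (Fin d → ℝ) →L[ℝ] ℝ,
      HasFDerivAt (fun y => dotProduct (y - ν) (A.mulVec (y - ν)) / 2) D x ∧
      ∀ j, D (Pi.single j 1) = A.mulVec (x - ν) j := by
  have h0 : ∀ k, HasFDerivAt (fun y : Fin d → ℝ => y k)
      (ContinuousLinearMap.proj k (R := ℝ) (φ := fun _ : Fin d => ℝ)) x := fun k =>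
    hasFDerivAt_apply k x
  have h1 : ∀ k, HasFDerivAt (fun y : Fin d → ℝ => y k - ν k)
      (ContinuousLinearMap.proj k (R := ℝ) (φ := fun _ : Fin d => ℝ)) x :=
    fun k => (h0 k).sub_const (ν k)
  have h2 := (HasFDerivAt.fun_sum (fun k (_ : k ∈ Finset.univ) =>
      (h1 k).mul (HasFDerivAt.fun_sum (fun l (_ : l ∈ Finset.univ) =>
        ((h1 l).const_mul (A k l)))))).mul_const ((2:ℝ)⁻¹)
  have hfun : (fun y : Fin d → ℝ => dotProduct (y - ν) (A.mulVec (y - ν)) / 2)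
      = fun y => (∑ k, (y k - ν k) * ∑ l, A k l * (y l - ν l)) * 2⁻¹ := by
    funext y
    simp [dotProduct, Matrix.mulVec, div_eq_mul_inv]
  rw [hfun]
  refine ⟨_, h2, ?_⟩
  intro j
  simp [ContinuousLinearMap.sum_apply, Pi.single_apply, Matrix.mulVec, dotProduct,
      Finset.sum_ite_eq', mul_ite, Finset.mul_sum]
  simp only [mul_add, Finset.sum_add_distrib, mul_ite, mul_zero, Finset.sum_ite_eq, Finset.sum_ite_eq',
    Finset.mem_univ, if_true]
  rw [Finset.mul_sum, ← Finset.sum_add_distrib]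
  refine Finset.sum_congr rfl fun k _ => ?_
  rw [hA k j]; ring

lemma F_deriv (φ : ℝ → ℝ) (hφint : IntegrableOn φ (Set.Ioi 0))
    (hφC1 : ContDiffOn ℝ 1 φ (Set.Ioi 0)) {t₀ : ℝ} (ht₀ : 0 < t₀) :
    HasDerivAt (fun s => ∫ u in Set.Ioi s, φ u) (-φ t₀) t₀ := by
  set a := t₀ / 2 with ha
  have ha0 : 0 < a := by positivity
  have hat : a < t₀ := by simp [ha]; linarith
  have hcont : ContinuousAt φ t₀ :=
    (hφC1.continuousOn.continuousAt (isOpen_Ioi.mem_nhds ht₀))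
  have hint : IntervalIntegrable φ volume a t₀ := by
    apply (hφint.mono_set ?_).intervalIntegrable
    rw [Set.uIcc_of_le hat.le]
    intro u hu; exact lt_of_lt_of_le ha0 hu.1
  have hmeas : StronglyMeasurableAtFilter φ (nhds t₀) :=
    ContinuousAt.stronglyMeasurableAtFilter isOpen_Ioi
      (fun u hu => hφC1.continuousOn.continuousAt (isOpen_Ioi.mem_nhds hu)) t₀ ht₀
  have key := ((intervalIntegral.integral_hasDerivAt_right hint hmeas hcont).const_sub
      (∫ u in Set.Ioi a, φ u))
  apply key.congr_of_eventuallyEq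
  filter_upwards [eventually_gt_nhds hat] with s hs
  rw [intervalIntegral.integral_of_le hs.le, eq_sub_iff_add_eq, add_comm,
    ← setIntegral_union (Set.Ioc_disjoint_Ioi le_rfl) measurableSet_Ioi
      (hφint.mono_set (fun u hu => lt_of_lt_of_le ha0 hu.1.le))
      (hφint.mono_set (Set.Ioi_subset_Ioi (by linarith))),
    Set.Ioc_union_Ioi_eq_Ioi hs.le]

/-- For an elliptical density `p(x) = κ|S|^{-1/2} φ(t)` with `t = (x-ν)ᵀS⁻¹(x-ν)/2`,
`φ` being `C¹`, positive and integrable on `(0,∞)`, the matrix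
`τ₁(x) = (1/φ(t)) ∫_t^∞ φ(u) du · S` satisfies `div(τ₁ p)(x) = (ν - x) p(x)`
(row-wise divergence) wherever `p(x) > 0`. -/
theorem elliptical_stein_kernel (d : ℕ) (ν : Fin d → ℝ)
    (S : Matrix (Fin d) (Fin d) ℝ) (hS : S.PosDef)
    (κ : ℝ) (hκ : 0 < κ) (φ : ℝ → ℝ)
    (hφpos : ∀ t ∈ Set.Ioi (0 : ℝ), 0 < φ t)
    (hφC1 : ContDiffOn ℝ 1 φ (Set.Ioi 0))
    (hφint : IntegrableOn φ (Set.Ioi 0))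
    (p : (Fin d → ℝ) → ℝ)
    (hp : ∀ x, p x = κ * S.det ^ (-(1 : ℝ) / 2) *
      φ (dotProduct (x - ν) (S⁻¹.mulVec (x - ν)) / 2)) :
    ∀ x, 0 < p x → ∀ i,
      (∑ j, fderiv ℝ (fun y =>
          (1 / φ (dotProduct (y - ν) (S⁻¹.mulVec (y - ν)) / 2)) *
            (∫ u in Set.Ioi (dotProduct (y - ν) (S⁻¹.mulVec (y - ν)) / 2), φ u) *
            S i j * p y) x (Pi.single j 1))
        = (ν i - x i) * p x := by
  intro x hpx i
  set c := κ * S.det ^ (-(1 : ℝ) / 2) with hcdef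
  have hc0 : 0 < c := mul_pos hκ (Real.rpow_pos_of_pos hS.det_pos _)
  set A := S⁻¹ with hAdef
  have hApd : A.PosDef := hS.inv
  have hAsymm : ∀ k l, A k l = A l k := by
    intro k l
    have h := congrFun (congrFun hApd.1 k) l
    simpa [Matrix.conjTranspose_apply] using h.symm
  set t : (Fin d → ℝ) → ℝ := fun y => dotProduct (y - ν) (A.mulVec (y - ν)) / 2 with htdef
  have hty : ∀ y, t y = dotProduct (y - ν) (A.mulVec (y - ν)) / 2 := fun y => rfl
  have htpos : ∀ y, y ≠ ν → 0 < t y := by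
    intro y hy
    have h := hApd.dotProduct_mulVec_pos (x := y - ν) (sub_ne_zero.2 hy)
    simp only [star_trivial] at h
    rw [hty]
    positivity
  have hφtx : 0 < φ (t x) := by
    have h := hp x
    rw [h] at hpx
    nlinarith [hpx, hc0]
  have hpt : ∀ y, p y = c * φ (t y) := fun y => hp y
  have hEvPt : ∀ j, ∀ y, 0 < φ (t y) →
      (1 / φ (dotProduct (y - ν) (A.mulVec (y - ν)) / 2)) *
        (∫ u in Set.Ioi (dotProduct (y - ν) (A.mulVec (y - ν)) / 2), φ u) *
        S i j * p y
      = c * (∫ u in Set.Ioi (t y), φ u) * S i j := by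
    intro j y hy
    rw [← hty, hpt y]
    field_simp
  rcases eq_or_ne x ν with hx | hx
  · -- x = ν : both sides vanish
    have hall : ∀ y, 0 < φ (t y) := by
      intro y
      rcases eq_or_ne y ν with h | h
      · rw [h, ← hx]; exact hφtx
      · exact hφpos _ (htpos y h)
    have hRHS : (ν i - x i) * p x = 0 := by rw [hx]; ring
    rw [hRHS]
    refine Finset.sum_eq_zero fun j _ => ?_
    have hEv : (fun y => (1 / φ (dotProduct (y - ν) (A.mulVec (y - ν)) / 2)) *
          (∫ u in Set.Ioi (dotProduct (y - ν) (A.mulVec (y - ν)) / 2), φ u) *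
          S i j * p y)
        =ᶠ[nhds x] (fun y => c * (∫ u in Set.Ioi (t y), φ u) * S i j) :=
      Filter.Eventually.of_forall fun y => hEvPt j y (hall y)
    rw [hEv.fderiv_eq]
    set G : (Fin d → ℝ) → ℝ := fun y => c * (∫ u in Set.Ioi (t y), φ u) * S i j with hGdef
    -- reflection symmetry
    have htr : ∀ y, t ((ν + ν) - y) = t y := by
      intro y
      rw [hty, hty]
      have key : ((ν + ν) - y) - ν = -(y - ν) := by abel
      rw [key, Matrix.mulVec_neg, neg_dotProduct, dotProduct_neg, neg_neg]
    have hGr : (fun y => G ((ν + ν) - y)) = G := by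
      funext y
      simp only [hGdef, htr y]
    by_cases hdiff : DifferentiableAt ℝ G x
    · have hrx : (ν + ν) - x = x := by rw [hx]; abel
      have hrd : HasFDerivAt (fun y : Fin d → ℝ => (ν + ν) - y)
          (-(ContinuousLinearMap.id ℝ (Fin d → ℝ))) x :=
        (hasFDerivAt_id x).const_sub (ν + ν)
      have hcomp : fderiv ℝ (G ∘ fun y => (ν + ν) - y) x
          = (fderiv ℝ G (((ν + ν) - x))).comp (fderiv ℝ (fun y : Fin d → ℝ => (ν + ν) - y) x) :=
        fderiv_comp x (by rw [hrx]; exact hdiff) hrd.differentiableAt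
      have hGreq : (G ∘ fun y => (ν + ν) - y) = G := hGr
      rw [hGreq, hrx, hrd.fderiv] at hcomp
      have happ := congrFun (congrArg DFunLike.coe hcomp) (Pi.single j 1)
      simp only [ContinuousLinearMap.comp_apply, ContinuousLinearMap.neg_apply,
        ContinuousLinearMap.coe_id', id_eq, map_neg] at happ
      linarith
    · rw [fderiv_zero_of_not_differentiableAt hdiff]
      simp
  · -- x ≠ ν
    have htx : 0 < t x := htpos x hx
    obtain ⟨D, hD, hDval⟩ := quad_deriv A hAsymm ν x
    have hD' : HasFDerivAt t D x := by rw [htdef]; exact hD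
    have htcont : ContinuousAt t x := hD'.differentiableAt.continuousAt
    have hnb : ∀ᶠ y in nhds x, 0 < t y := htcont.eventually (eventually_gt_nhds htx)
    have hF := F_deriv φ hφint hφC1 htx
    have hFt : HasFDerivAt (fun y => ∫ u in Set.Ioi (t y), φ u) ((-φ (t x)) • D) x :=
      hF.comp_hasFDerivAt x hD'
    have hfd : ∀ j, fderiv ℝ (fun y =>
        (1 / φ (dotProduct (y - ν) (A.mulVec (y - ν)) / 2)) *
          (∫ u in Set.Ioi (dotProduct (y - ν) (A.mulVec (y - ν)) / 2), φ u) *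
          S i j * p y) x
        = (S i j) • (c • ((-φ (t x)) • D)) := by
      intro j
      have hEv : (fun y => (1 / φ (dotProduct (y - ν) (A.mulVec (y - ν)) / 2)) *
            (∫ u in Set.Ioi (dotProduct (y - ν) (A.mulVec (y - ν)) / 2), φ u) *
            S i j * p y)
          =ᶠ[nhds x] (fun y => c * (∫ u in Set.Ioi (t y), φ u) * S i j) := by
        filter_upwards [hnb] with y hy
        exact hEvPt j y (hφpos _ hy)
      rw [hEv.fderiv_eq]
      exact ((hFt.const_mul c).mul_const (S i j)).fderiv
    calc (∑ j, fderiv ℝ (fun y =>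
          (1 / φ (dotProduct (y - ν) (A.mulVec (y - ν)) / 2)) *
            (∫ u in Set.Ioi (dotProduct (y - ν) (A.mulVec (y - ν)) / 2), φ u) *
            S i j * p y) x (Pi.single j 1))
        = ∑ j, S i j * (c * (-φ (t x) * (A.mulVec (x - ν) j))) := by
          refine Finset.sum_congr rfl fun j _ => ?_
          rw [hfd j]
          simp [hDval j]
      _ = -(c * φ (t x)) * ∑ j, S i j * (A.mulVec (x - ν) j) := by
          rw [Finset.mul_sum]; refine Finset.sum_congr rfl fun j _ => ?_; ring
      _ = -(c * φ (t x)) * ((S * A).mulVec (x - ν) i) := by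
          rw [← Matrix.mulVec_mulVec]; rfl
      _ = (ν i - x i) * p x := by
          rw [hAdef, Matrix.mul_nonsing_inv S (isUnit_iff_ne_zero.2 hS.det_pos.ne'),
            Matrix.one_mulVec, hpt x]
          simp only [Pi.sub_apply]
          ring
end

section
/- Let φ : (0,∞) → (0,∞) be C¹ and let a, b : (0,∞) → ℝ be C¹ functions satisfying (a(t)φ(t))'/φ(t) + 2t (b(t)φ(t))'/φ(t) + (d+1) b(t) + 1 = 0 for all t > 0. Then for the spherical density p(x) = κ φ(|x|²/2) on ℝ^d, the matrix τ(x) = a(t) I_d + b(t) x xᵀ with t = |x|²/2 satisfies div(τ p)(x) = -x p(x) for all x ≠ 0. -/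
open MeasureTheory Real Matrix

/-- If `a, b` are `C¹` on `(0,∞)` and satisfy
`(aφ)'/φ + 2t (bφ)'/φ + (d+1) b + 1 = 0` on `(0,∞)`, then for the spherical density
`p(x) = κ φ(|x|²/2)`, the matrix `τ(x) = a(t) I_d + b(t) x xᵀ` (with `t = |x|²/2`)
satisfies `div(τ p)(x) = -x p(x)` for all `x ≠ 0` (row-wise divergence). -/
theorem spherical_stein_kernel_ab (d : ℕ) (κ : ℝ) (hκ : 0 < κ)
    (φ a b : ℝ → ℝ)
    (hφpos : ∀ t ∈ Set.Ioi (0 : ℝ), 0 < φ t)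
    (hφC1 : ContDiffOn ℝ 1 φ (Set.Ioi 0))
    (haC1 : ContDiffOn ℝ 1 a (Set.Ioi 0))
    (hbC1 : ContDiffOn ℝ 1 b (Set.Ioi 0))
    (hrel : ∀ t ∈ Set.Ioi (0 : ℝ),
      deriv (fun s => a s * φ s) t / φ t + 2 * t * (deriv (fun s => b s * φ s) t / φ t) +
        ((d : ℝ) + 1) * b t + 1 = 0)
    (p : (Fin d → ℝ) → ℝ)
    (hp : ∀ x, p x = κ * φ ((∑ i, x i ^ 2) / 2)) :
    ∀ x : Fin d → ℝ, x ≠ 0 → ∀ i,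
      (∑ j, fderiv ℝ (fun y =>
          (a ((∑ l, y l ^ 2) / 2) * (1 : Matrix (Fin d) (Fin d) ℝ) i j +
            b ((∑ l, y l ^ 2) / 2) * (y i * y j)) * p y) x (Pi.single j 1))
        = -(x i) * p x := by
  intro x hx i
  have hs : 0 < (∑ l, x l ^ 2) / 2 := by
    obtain ⟨l, hl⟩ := Function.ne_iff.mp hx
    have h1 : 0 < ∑ l, x l ^ 2 :=
      Finset.sum_pos' (fun m _ => sq_nonneg _) ⟨l, Finset.mem_univ l, pow_two_pos_of_ne_zero hl⟩
    linarith
  set s : ℝ := (∑ l, x l ^ 2) / 2 with hs_def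
  have hmem : Set.Ioi (0:ℝ) ∈ nhds s := isOpen_Ioi.mem_nhds hs
  have hφd : DifferentiableAt ℝ φ s := (hφC1.differentiableOn one_ne_zero).differentiableAt hmem
  have had : DifferentiableAt ℝ a s := (haC1.differentiableOn one_ne_zero).differentiableAt hmem
  have hbd : DifferentiableAt ℝ b s := (hbC1.differentiableOn one_ne_zero).differentiableAt hmem
  have hA' : HasDerivAt (fun u => a u * φ u) (deriv (fun u => a u * φ u) s) s :=
    (had.mul hφd).hasDerivAt
  have hB' : HasDerivAt (fun u => b u * φ u) (deriv (fun u => b u * φ u) s) s :=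
    (hbd.mul hφd).hasDerivAt
  -- derivative of t(y) = (∑ y l ^ 2)/2
  set P : Fin d → ((Fin d → ℝ) →L[ℝ] ℝ) := fun l => ContinuousLinearMap.proj l with hP
  have hproj : ∀ l : Fin d, HasFDerivAt (fun y : Fin d → ℝ => y l) (P l) x :=
    fun l => (P l).hasFDerivAt
  have hsq : ∀ l : Fin d, HasFDerivAt (fun y : Fin d → ℝ => y l ^ 2)
      (x l • P l + x l • P l) x := by
    intro l
    simpa [pow_two] using (hproj l).fun_mul (hproj l)
  have hsum : HasFDerivAt (fun y : Fin d → ℝ => ∑ l, y l ^ 2)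
      (∑ l, (x l • P l + x l • P l)) x :=
    HasFDerivAt.fun_sum (fun l _ => hsq l)
  have htd : HasFDerivAt (fun y : Fin d → ℝ => (∑ l, y l ^ 2) / 2)
      ((2:ℝ)⁻¹ • ∑ l, (x l • P l + x l • P l)) x := by
    simpa [div_eq_mul_inv] using hsum.mul_const ((2:ℝ)⁻¹)
  have hpx : p x = κ * φ s := by rw [hp x]
  -- per-coordinate derivative
  have key : ∀ j, fderiv ℝ (fun y =>
          (a ((∑ l, y l ^ 2) / 2) * (1 : Matrix (Fin d) (Fin d) ℝ) i j +
            b ((∑ l, y l ^ 2) / 2) * (y i * y j)) * p y) x (Pi.single j 1) =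
      κ * (deriv (fun u => a u * φ u) s * x j * (1 : Matrix (Fin d) (Fin d) ℝ) i j
        + b s * φ s * (x i + x j * (if i = j then 1 else 0))
        + deriv (fun u => b u * φ u) s * (x i * (x j * x j))) := by
    intro j
    have hfun : (fun y : Fin d → ℝ =>
        (a ((∑ l, y l ^ 2) / 2) * (1 : Matrix (Fin d) (Fin d) ℝ) i j +
          b ((∑ l, y l ^ 2) / 2) * (y i * y j)) * p y)
        = (fun y : Fin d → ℝ => κ *
            (a ((∑ l, y l ^ 2) / 2) * φ ((∑ l, y l ^ 2) / 2) *
              (1 : Matrix (Fin d) (Fin d) ℝ) i j +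
             b ((∑ l, y l ^ 2) / 2) * φ ((∑ l, y l ^ 2) / 2) * (y i * y j))) := by
      funext y; rw [hp y]; ring
    have hc1 : HasFDerivAt (fun y : Fin d → ℝ =>
        a ((∑ l, y l ^ 2) / 2) * φ ((∑ l, y l ^ 2) / 2))
        (deriv (fun u => a u * φ u) s •
          ((2:ℝ)⁻¹ • ∑ l, (x l • P l + x l • P l))) x :=
      by have := hA'.comp_hasFDerivAt x htd; exact this
    have hc2 : HasFDerivAt (fun y : Fin d → ℝ =>
        b ((∑ l, y l ^ 2) / 2) * φ ((∑ l, y l ^ 2) / 2))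
        (deriv (fun u => b u * φ u) s •
          ((2:ℝ)⁻¹ • ∑ l, (x l • P l + x l • P l))) x :=
      by have := hB'.comp_hasFDerivAt x htd; exact this
    have hprod : HasFDerivAt (fun y : Fin d → ℝ => y i * y j)
        (x i • P j + x j • P i) x :=
      (hproj i).mul (hproj j)
    have hG := ((hc1.mul_const ((1 : Matrix (Fin d) (Fin d) ℝ) i j)).fun_add
      (hc2.fun_mul hprod)).const_mul κ
    rw [hfun, hG.fderiv]
    simp only [hP, ContinuousLinearMap.smul_apply, ContinuousLinearMap.add_apply,
      ContinuousLinearMap.coe_sum', Finset.sum_apply, ContinuousLinearMap.sum_apply,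
      ContinuousLinearMap.proj_apply, Pi.single_apply, smul_eq_mul, mul_ite, mul_one,
      mul_zero, Finset.sum_add_distrib, Finset.sum_ite_eq', Finset.mem_univ, if_true]
    split_ifs with h <;> ring
  rw [Finset.sum_congr rfl (fun j _ => key j)]
  -- relation
  have hφ0 : φ s ≠ 0 := (hφpos s hs).ne'
  have h0 := hrel s hs
  have key0 : deriv (fun u => a u * φ u) s + 2 * s * deriv (fun u => b u * φ u) s +
      ((d : ℝ) + 1) * (b s * φ s) + φ s = 0 := by
    field_simp at h0
    rw [deriv_fun_mul had hφd, deriv_fun_mul hbd hφd] at h0 ⊢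
    linarith
  have h2s : ∑ j, x j * x j = 2 * s := by
    rw [hs_def, Finset.sum_congr rfl (fun j _ => (pow_two (x j)).symm)]; ring
  simp only [Matrix.one_apply, mul_ite, ite_mul, mul_one, mul_zero, zero_mul,
    Finset.sum_add_distrib, Finset.sum_ite_eq, Finset.mem_univ, if_true,
    Finset.mul_sum, hpx]
  have e1 : ∑ j : Fin d, (if i = j then x j else 0) = x i := by simp
  have step : ∀ j : Fin d, κ *
        ((if i = j then deriv (fun u => a u * φ u) s * x j else 0) +
            b s * φ s * (x i + if i = j then x j else 0) +
          deriv (fun u => b u * φ u) s * (x i * (x j * x j))) =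
      κ * deriv (fun u => a u * φ u) s * (if i = j then x j else 0) +
        κ * (b s * φ s) * x i + κ * (b s * φ s) * (if i = j then x j else 0) +
        κ * deriv (fun u => b u * φ u) s * x i * (x j * x j) := by
    intro j; split_ifs with h <;> ring
  rw [Finset.sum_congr rfl (fun j _ => step j), Finset.sum_add_distrib,
    Finset.sum_add_distrib, Finset.sum_add_distrib, ← Finset.mul_sum, ← Finset.mul_sum,
    ← Finset.mul_sum, ← Finset.mul_sum, e1, h2s, Finset.sum_const, Finset.card_univ, Fintype.card_fin,
    nsmul_eq_mul]
  linear_combination (κ * x i) * key0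
end

section
/- Let φ : (0,∞) → (0,∞) be continuous with ∫₀^∞ u^{(d-1)/2} φ(u) du < ∞ and let p(x) = κ φ(t) be a spherical density on ℝ^d with t = |x|²/2. Then b(t) = (t^{-(d+1)/2}/(2φ(t))) ∫_t^∞ u^{(d-1)/2} φ(u) du solves (bφ)'(t) + ((d+1)/(2t)) b(t)φ(t) = -φ(t)/(2t), and hence τ(x) = b(t) x xᵀ satisfies div(τ p)(x) = -x p(x) for x ≠ 0. -/
open MeasureTheory Real Matrix

lemma aux_F_deriv (f : ℝ → ℝ) (hf : ContinuousOn f (Set.Ioi 0))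
    (hfi : IntegrableOn f (Set.Ioi 0)) {t : ℝ} (ht : 0 < t) :
    HasDerivAt (fun s => ∫ u in Set.Ioi s, f u) (-(f t)) t := by
  set a := t / 2 with ha
  have ha0 : 0 < a := by positivity
  have key : ∀ s ∈ Set.Ioi (0:ℝ),
      (∫ u in Set.Ioi s, f u) = (∫ u in Set.Ioi a, f u) - ∫ u in a..s, f u := by
    intro s hs
    have hs0 : 0 < s := hs
    have split : ∀ c e : ℝ, 0 < c → c ≤ e →
        (∫ u in Set.Ioi c, f u) = (∫ u in Set.Ioc c e, f u) + ∫ u in Set.Ioi e, f u := by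
      intro c e hc hce
      rw [← MeasureTheory.setIntegral_union (Set.Ioc_disjoint_Ioi le_rfl)
        measurableSet_Ioi (hfi.mono_set (by intro u hu; exact hc.trans hu.1))
        (hfi.mono_set (fun u hu => lt_of_le_of_lt hc.le (lt_of_le_of_lt hce hu)))]
      rw [Set.Ioc_union_Ioi_eq_Ioi hce]
    rcases le_total a s with h | h
    · rw [intervalIntegral.integral_of_le h, split a s ha0 h]; ring
    · rw [intervalIntegral.integral_of_ge h, split s a hs0 h]; ring
  have hmeas : StronglyMeasurableAtFilter f (nhds t) volume :=
    hf.stronglyMeasurableAtFilter isOpen_Ioi t ht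
  have hii : IntervalIntegrable f volume a t := by
    apply (hfi.mono_set _).intervalIntegrable
    intro u hu
    exact lt_of_lt_of_le (lt_min ha0 ht) hu.1
  have hct : ContinuousAt f t := hf.continuousAt (Ioi_mem_nhds ht)
  have h1 := (intervalIntegral.integral_hasDerivAt_right hii hmeas hct).const_sub
    (∫ u in Set.Ioi a, f u)
  apply h1.congr_of_eventuallyEq
  filter_upwards [Ioi_mem_nhds ht] with s hs
  exact key s hs


/-- For a spherical density `p(x) = κ φ(t)` with `t = |x|²/2` and
`∫₀^∞ u^{(d-1)/2} φ(u) du < ∞`, the function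
`b(t) = (t^{-(d+1)/2}/(2φ(t))) ∫_t^∞ u^{(d-1)/2} φ(u) du` solves
`(bφ)'(t) + ((d+1)/(2t)) b(t)φ(t) = -φ(t)/(2t)` on `(0,∞)`, and hence
`τ(x) = b(t) x xᵀ` satisfies `div(τ p)(x) = -x p(x)` for `x ≠ 0`. -/
theorem spherical_stein_kernel_b (d : ℕ) (κ : ℝ) (hκ : 0 < κ)
    (φ : ℝ → ℝ)
    (hφpos : ∀ t ∈ Set.Ioi (0 : ℝ), 0 < φ t)
    (hφcont : ContinuousOn φ (Set.Ioi 0))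
    (hφint : IntegrableOn (fun u => u ^ (((d : ℝ) - 1) / 2) * φ u) (Set.Ioi 0))
    (b : ℝ → ℝ)
    (hb : ∀ t, b t = (t ^ (-(((d : ℝ) + 1) / 2)) / (2 * φ t)) *
      ∫ u in Set.Ioi t, u ^ (((d : ℝ) - 1) / 2) * φ u)
    (p : (Fin d → ℝ) → ℝ)
    (hp : ∀ x, p x = κ * φ ((∑ i, x i ^ 2) / 2)) :
    (∀ t ∈ Set.Ioi (0 : ℝ),
      deriv (fun s => b s * φ s) t + (((d : ℝ) + 1) / (2 * t)) * b t * φ t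
        = -φ t / (2 * t)) ∧
    (∀ x : Fin d → ℝ, x ≠ 0 → ∀ i,
      (∑ j, fderiv ℝ (fun y =>
          b ((∑ l, y l ^ 2) / 2) * (y i * y j) * p y) x (Pi.single j 1))
        = -(x i) * p x) := by
  set f : ℝ → ℝ := fun u => u ^ (((d : ℝ) - 1) / 2) * φ u with hfdef
  set F : ℝ → ℝ := fun s => ∫ u in Set.Ioi s, f u with hFdef
  set e : ℝ := -(((d : ℝ) + 1) / 2) with hedef
  set G : ℝ → ℝ := fun s => s ^ e / 2 * F s with hGdef
  have hcontf : ContinuousOn f (Set.Ioi 0) := by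
    apply ContinuousOn.mul _ hφcont
    exact continuousOn_id.rpow_const (fun x hx => Or.inl (ne_of_gt hx))
  have hFd : ∀ t ∈ Set.Ioi (0:ℝ), HasDerivAt F (-(f t)) t :=
    fun t ht => aux_F_deriv f hcontf hφint ht
  have hGd : ∀ t ∈ Set.Ioi (0:ℝ),
      HasDerivAt G (e * t ^ (e - 1) / 2 * F t + t ^ e / 2 * (-(f t))) t := by
    intro t ht
    have h1 : HasDerivAt (fun s : ℝ => s ^ e / 2) (e * t ^ (e - 1) / 2) t :=
      (Real.hasDerivAt_rpow_const (Or.inl (ne_of_gt ht))).div_const 2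
    exact h1.mul (hFd t ht)
  have hbφ : ∀ t ∈ Set.Ioi (0:ℝ), b t * φ t = G t := by
    intro t ht
    have hφne : φ t ≠ 0 := ne_of_gt (hφpos t ht)
    rw [hb, hGdef]
    field_simp
    ring
  have hode : ∀ t ∈ Set.Ioi (0:ℝ),
      (e * t ^ (e - 1) / 2 * F t + t ^ e / 2 * (-(f t)))
        + (((d:ℝ) + 1) / (2 * t)) * G t = -φ t / (2 * t) := by
    intro t ht
    have ht' : (0:ℝ) < t := ht
    have htne : t ≠ 0 := ne_of_gt ht'
    have h1 : t ^ (e - 1) = t ^ e / t := by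
      rw [Real.rpow_sub ht', Real.rpow_one]
    have h2 : t ^ e * f t = φ t / t := by
      rw [hfdef]
      simp only
      rw [← mul_assoc, ← Real.rpow_add ht']
      have h3 : e + (((d:ℝ) - 1) / 2) = -1 := by rw [hedef]; ring
      rw [h3, Real.rpow_neg_one]
      ring
    have hd1 : ((d:ℝ) + 1) = -(2 * e) := by rw [hedef]; ring
    rw [hGdef, h1, hd1]
    simp only
    rw [div_eq_mul_inv (t ^ e) t, div_eq_mul_inv (φ t) t] at *
    linear_combination (-(1/2 : ℝ)) * h2
  constructor
  · intro t ht
    have hder : deriv (fun s => b s * φ s) t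
        = e * t ^ (e - 1) / 2 * F t + t ^ e / 2 * (-(f t)) := by
      have h : HasDerivAt (fun s => b s * φ s)
          (e * t ^ (e - 1) / 2 * F t + t ^ e / 2 * (-(f t))) t := by
        apply (hGd t ht).congr_of_eventuallyEq
        filter_upwards [Ioi_mem_nhds ht] with s hs
        exact hbφ s hs
      exact h.deriv
    rw [hder, mul_assoc, hbφ t ht]
    exact hode t ht
  · intro x hx i
    have hsumpos : 0 < ∑ l, x l ^ 2 := by
      rcases Function.ne_iff.mp hx with ⟨k, hk⟩
      have hk' : x k ≠ 0 := by simpa using hk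
      have : 0 < x k ^ 2 := by positivity
      exact Finset.sum_pos' (fun l _ => sq_nonneg _) ⟨k, Finset.mem_univ k, this⟩
    set t₀ : ℝ := (∑ l, x l ^ 2) / 2 with ht₀def
    have ht₀ : (0:ℝ) < t₀ := by positivity
    set D : ℝ := e * t₀ ^ (e - 1) / 2 * F t₀ + t₀ ^ e / 2 * (-(f t₀)) with hDdef
    have hGt : HasDerivAt G D t₀ := hGd t₀ ht₀
    -- derivative of S y = (∑ l, y l ^ 2) / 2
    set S : (Fin d → ℝ) → ℝ := fun y => (∑ l, y l ^ 2) / 2 with hSdef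
    have hsq : ∀ l, HasFDerivAt (fun y : Fin d → ℝ => y l ^ 2)
        (x l • (ContinuousLinearMap.proj l : (Fin d → ℝ) →L[ℝ] ℝ)
          + x l • ContinuousLinearMap.proj l) x := by
      intro l
      have h := ((ContinuousLinearMap.proj l :
          (Fin d → ℝ) →L[ℝ] ℝ).hasFDerivAt (x := x)).fun_mul
        ((ContinuousLinearMap.proj l : (Fin d → ℝ) →L[ℝ] ℝ).hasFDerivAt (x := x))
      simpa only [pow_two, ContinuousLinearMap.proj_apply] using h
    set LS : (Fin d → ℝ) →L[ℝ] ℝ :=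
      (2:ℝ)⁻¹ • ∑ l, (x l • (ContinuousLinearMap.proj l : (Fin d → ℝ) →L[ℝ] ℝ)
        + x l • ContinuousLinearMap.proj l) with hLSdef
    have hS : HasFDerivAt S LS x := by
      have h0 : HasFDerivAt (fun y : Fin d → ℝ => ∑ l, y l ^ 2)
          (∑ l, (x l • (ContinuousLinearMap.proj l : (Fin d → ℝ) →L[ℝ] ℝ)
            + x l • ContinuousLinearMap.proj l)) x := HasFDerivAt.fun_sum (fun l _ => hsq l)
      have h := h0.fun_const_smul ((2:ℝ)⁻¹)
      rw [hLSdef, hSdef]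
      simpa only [smul_eq_mul, ← div_eq_inv_mul] using h
    have hSx : t₀ = S x := by rw [hSdef]
    have hGS : HasFDerivAt (G ∘ S) (D • LS) x :=
      HasDerivAt.comp_hasFDerivAt_of_eq x hGt hS hSx
    have hterm : ∀ j, fderiv ℝ (fun y =>
          b ((∑ l, y l ^ 2) / 2) * (y i * y j) * p y) x (Pi.single j 1)
        = κ * (G t₀ * x i) + (if i = j then κ * (G t₀ * x j) else 0)
          + κ * (x i * D) * x j ^ 2 := by
      intro j
      have hij : HasFDerivAt (fun y : Fin d → ℝ => y i * y j)
          (x i • (ContinuousLinearMap.proj j : (Fin d → ℝ) →L[ℝ] ℝ)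
            + x j • ContinuousLinearMap.proj i) x := by
        have h := ((ContinuousLinearMap.proj i :
            (Fin d → ℝ) →L[ℝ] ℝ).hasFDerivAt (x := x)).fun_mul
          ((ContinuousLinearMap.proj j : (Fin d → ℝ) →L[ℝ] ℝ).hasFDerivAt (x := x))
        simpa only [ContinuousLinearMap.proj_apply] using h
      have hmul := hGS.fun_mul hij
      have hnice := hmul.mul_const κ
      have hScont : Continuous S := by
        rw [hSdef]; fun_prop
      have heq : (fun y =>
          b ((∑ l, y l ^ 2) / 2) * (y i * y j) * p y)
          =ᶠ[nhds x] (fun y => (G ∘ S) y * (y i * y j) * κ) := by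
        have hU : S ⁻¹' (Set.Ioi 0) ∈ nhds x := by
          apply (isOpen_Ioi.preimage hScont).mem_nhds
          show S x ∈ Set.Ioi 0
          exact hSx ▸ ht₀
        filter_upwards [hU] with y hy
        have h := hbφ (S y) hy
        rw [hp]
        simp only [Function.comp_apply, hSdef] at h ⊢
        linear_combination (y i * y j * κ) * h
      rw [Filter.EventuallyEq.fderiv_eq (𝕜 := ℝ) heq, hnice.fderiv]
      have hGSx : (G ∘ S) x = G t₀ := by rw [Function.comp_apply, ← hSx]
      simp only [ContinuousLinearMap.add_apply, ContinuousLinearMap.smul_apply,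
        ContinuousLinearMap.coe_smul', Pi.smul_apply, ContinuousLinearMap.coe_sum',
        Finset.sum_apply, ContinuousLinearMap.proj_apply, Pi.single_apply,
        smul_eq_mul, hGSx, hLSdef]
      rw [Finset.sum_congr rfl (fun l (_ : l ∈ Finset.univ) => by
        rw [show (x l * (if l = j then (1:ℝ) else 0) + x l * (if l = j then (1:ℝ) else 0))
            = (if l = j then 2 * x l else 0) by split_ifs <;> ring])]
      rw [Finset.sum_ite_eq' Finset.univ j (fun l => 2 * x l)]
      simp only [Finset.mem_univ, if_true]
      split_ifs with hij'
      · subst hij'; ring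
      · ring
    rw [Finset.sum_congr rfl (fun j (_ : j ∈ Finset.univ) => hterm j)]
    rw [Finset.sum_add_distrib, Finset.sum_add_distrib, Finset.sum_const,
      Finset.sum_ite_eq Finset.univ i (fun j => κ * (G t₀ * x j)), ← Finset.mul_sum]
    have h2t : ∑ j, x j ^ 2 = 2 * t₀ := by rw [ht₀def]; ring
    have hkey : 2 * t₀ * D + ((d:ℝ) + 1) * G t₀ = -φ t₀ := by
      have h := hode t₀ ht₀
      rw [← hDdef] at h
      field_simp at h
      linarith
    rw [hp, ← ht₀def, h2t]
    simp only [Finset.mem_univ, if_true, Finset.card_univ, Fintype.card_fin,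
      nsmul_eq_mul]
    linear_combination (κ * x i) * hkey
end
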